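/- arXiv:1709.00710 — 4 statements merged into one kernel-verified Lean document; each statement's English description precedes it below -/
import Mathlib

section
/- (Deterministic core of the l₂ error bound for the Dantzig selector.) Let V be a symmetric positive semidefinite p×p matrix, θ⁰ ∈ ℝ^p with support T (so θ⁰_j = 0 for j ∉ T), and θ̂ ∈ ℝ^p with ‖θ̂‖₁ ≤ ‖θ⁰‖₁. Set h = θ̂ - θ⁰ and suppose h^T V h ≤ 2γ‖h‖₁ for some γ > 0. Then h ∈ C_T (i.e. ‖h_{T^c}‖₁ ≤ ‖h_T‖₁), and h^T V h ≤ 4‖θ⁰‖₁·γ. Consequently, if RE(T,V) > 0 then ‖θ̂ - θ⁰‖₂² ≤ 4‖θ⁰‖₁·γ / RE(T,V)². -/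
open Finset Matrix

/-- Deterministic core of the l₂ error bound for the Dantzig selector:
if `‖θ̂‖₁ ≤ ‖θ⁰‖₁` and `hᵀVh ≤ 2γ‖h‖₁` for `h = θ̂ - θ⁰`, with `T` the support of `θ⁰`,
then `h` belongs to the cone `C_T`, `hᵀVh ≤ 4‖θ⁰‖₁γ`, and if `RE(T,V) > 0` then
`‖θ̂ - θ⁰‖₂² ≤ 4‖θ⁰‖₁γ/RE(T,V)²`. -/
theorem stmt5 (p : ℕ) (V : Matrix (Fin p) (Fin p) ℝ) (hPSD : V.PosSemidef)
    (θ0 θh : Fin p → ℝ) (γ : ℝ) (hγ : 0 < γ)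
    (T : Finset (Fin p)) (hT : ∀ j, j ∈ T ↔ θ0 j ≠ 0)
    (h : Fin p → ℝ) (hdef : h = θh - θ0)
    (hl1 : (∑ j, |θh j|) ≤ (∑ j, |θ0 j|))
    (hQ : h ⬝ᵥ V.mulVec h ≤ 2 * γ * (∑ j, |h j|)) :
    (∑ j ∈ Tᶜ, |h j|) ≤ (∑ j ∈ T, |h j|) ∧
    h ⬝ᵥ V.mulVec h ≤ 4 * (∑ j, |θ0 j|) * γ ∧
    ∀ RE : ℝ,
      RE = sInf {x : ℝ | ∃ g : Fin p → ℝ, g ≠ 0 ∧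
          (∑ j ∈ Tᶜ, |g j|) ≤ (∑ j ∈ T, |g j|) ∧
          x = Real.sqrt (g ⬝ᵥ V.mulVec g) / Real.sqrt (∑ j, (g j) ^ 2)} →
      0 < RE →
      (∑ j, (θh j - θ0 j) ^ 2) ≤ 4 * (∑ j, |θ0 j|) * γ / RE ^ 2 := by
  have hzero : ∀ j ∈ Tᶜ, θ0 j = 0 := by
    intro j hj
    have := (hT j).not.mp (Finset.mem_compl.mp hj)
    simpa using this
  -- cone membership
  have hθ0split : (∑ j, |θ0 j|) = ∑ j ∈ T, |θ0 j| := by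
    rw [← Finset.sum_add_sum_compl T]
    have : ∑ j ∈ Tᶜ, |θ0 j| = 0 :=
      Finset.sum_eq_zero fun j hj => by rw [hzero j hj, abs_zero]
    rw [this, add_zero]
  have hθhsplit : (∑ j, |θh j|) = (∑ j ∈ T, |θh j|) + ∑ j ∈ Tᶜ, |h j| := by
    rw [← Finset.sum_add_sum_compl T]
    congr 1
    refine Finset.sum_congr rfl fun j hj => ?_
    rw [hdef]
    simp [hzero j hj]
  have hTlow : ∑ j ∈ T, |θ0 j| - ∑ j ∈ T, |h j| ≤ ∑ j ∈ T, |θh j| := by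
    rw [← Finset.sum_sub_distrib]
    refine Finset.sum_le_sum fun j _ => ?_
    have : θh j = θ0 j + h j := by rw [hdef]; ring_nf; simp
    rw [this]
    have := abs_add_le (θ0 j + h j) (-h j)
    simp only [add_neg_cancel_right, abs_neg] at this
    linarith
  have cone : (∑ j ∈ Tᶜ, |h j|) ≤ ∑ j ∈ T, |h j| := by
    have := hl1
    rw [hθhsplit, hθ0split] at this
    linarith
  -- quadratic bound
  have hl1h : (∑ j, |h j|) ≤ 2 * ∑ j, |θ0 j| := by
    have : (∑ j, |h j|) ≤ (∑ j, |θh j|) + ∑ j, |θ0 j| := by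
      rw [← Finset.sum_add_distrib]
      refine Finset.sum_le_sum fun j _ => ?_
      rw [hdef]
      simpa using abs_sub (θh j) (θ0 j)
    linarith
  have hQ4 : h ⬝ᵥ V.mulVec h ≤ 4 * (∑ j, |θ0 j|) * γ := by
    calc h ⬝ᵥ V.mulVec h ≤ 2 * γ * (∑ j, |h j|) := hQ
      _ ≤ 2 * γ * (2 * ∑ j, |θ0 j|) := by
          exact mul_le_mul_of_nonneg_left hl1h (by linarith)
      _ = 4 * (∑ j, |θ0 j|) * γ := by ring
  refine ⟨cone, hQ4, ?_⟩
  intro RE hRE hREpos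
  have hsum : (∑ j, (θh j - θ0 j) ^ 2) = ∑ j, (h j) ^ 2 := by
    refine Finset.sum_congr rfl fun j _ => ?_
    rw [hdef]; simp
  rw [hsum]
  have hθ0nonneg : (0:ℝ) ≤ ∑ j, |θ0 j| := Finset.sum_nonneg fun j _ => abs_nonneg _
  by_cases hh0 : h = 0
  · rw [hh0]
    simp
    positivity
  · -- h ≠ 0, so RE ≤ sqrt(hVh)/sqrt(∑h²)
    have hQnn : 0 ≤ h ⬝ᵥ V.mulVec h := by simpa using hPSD.dotProduct_mulVec_nonneg h
    have hsq : (0:ℝ) < ∑ j, (h j) ^ 2 := by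
      obtain ⟨j, hj⟩ := Function.ne_iff.mp hh0
      refine Finset.sum_pos' (fun i _ => sq_nonneg _) ⟨j, Finset.mem_univ j, ?_⟩
      have : h j ≠ 0 := by simpa using hj
      exact lt_of_le_of_ne (sq_nonneg _) (Ne.symm (pow_ne_zero 2 this))
    set S : Set ℝ := {x : ℝ | ∃ g : Fin p → ℝ, g ≠ 0 ∧
          (∑ j ∈ Tᶜ, |g j|) ≤ (∑ j ∈ T, |g j|) ∧
          x = Real.sqrt (g ⬝ᵥ V.mulVec g) / Real.sqrt (∑ j, (g j) ^ 2)} with hS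
    have hbdd : BddBelow S := by
      refine ⟨0, fun x hx => ?_⟩
      obtain ⟨g, _, _, hx⟩ := hx
      rw [hx]
      positivity
    have hmem : Real.sqrt (h ⬝ᵥ V.mulVec h) / Real.sqrt (∑ j, (h j) ^ 2) ∈ S :=
      ⟨h, hh0, cone, rfl⟩
    have hRE_le : RE ≤ Real.sqrt (h ⬝ᵥ V.mulVec h) / Real.sqrt (∑ j, (h j) ^ 2) := by
      rw [hRE]
      exact csInf_le hbdd hmem
    have hRE2 : RE ^ 2 ≤ (h ⬝ᵥ V.mulVec h) / (∑ j, (h j) ^ 2) := by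
      have := pow_le_pow_left₀ hREpos.le hRE_le 2
      calc RE ^ 2 ≤ (Real.sqrt (h ⬝ᵥ V.mulVec h) / Real.sqrt (∑ j, (h j) ^ 2)) ^ 2 := this
        _ = (h ⬝ᵥ V.mulVec h) / (∑ j, (h j) ^ 2) := by
            rw [div_pow, Real.sq_sqrt hQnn, Real.sq_sqrt hsq.le]
    have hkey : RE ^ 2 * (∑ j, (h j) ^ 2) ≤ h ⬝ᵥ V.mulVec h :=
      (le_div_iff₀ hsq).mp hRE2
    have hREsq : (0:ℝ) < RE ^ 2 := pow_pos hREpos 2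
    rw [le_div_iff₀ hREsq]
    calc (∑ j, (h j) ^ 2) * RE ^ 2 = RE ^ 2 * ∑ j, (h j) ^ 2 := by ring
      _ ≤ h ⬝ᵥ V.mulVec h := hkey
      _ ≤ 4 * (∑ j, |θ0 j|) * γ := hQ4
end

section
/- (Deterministic core of the l₁ error bound for the Dantzig selector.) Let V be a symmetric positive semidefinite p×p matrix, T ⊂ {1,…,p} with |T| = S ≥ 1, and h ∈ C_T = {h : ‖h_{T^c}‖₁ ≤ ‖h_T‖₁} with h ≠ 0. Suppose h^T V h ≤ 2γ‖h‖₁ for some γ > 0, and let κ = κ(T,V) = inf_{0≠g∈C_T} S^{1/2}(g^T V g)^{1/2}/‖g_T‖₁ > 0. Then ‖h‖₁ ≤ 8Sγ/κ². -/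
open Finset Matrix

/-- Deterministic core of the l₁ error bound for the Dantzig selector:
if `0 ≠ h ∈ C_T` satisfies `hᵀVh ≤ 2γ‖h‖₁` and the compatibility factor
`κ = κ(T,V) > 0`, then `‖h‖₁ ≤ 8Sγ/κ²`. -/
theorem stmt6 (p : ℕ) (V : Matrix (Fin p) (Fin p) ℝ) (hPSD : V.PosSemidef)
    (T : Finset (Fin p)) (S : ℕ) (hcard : T.card = S) (hS : 1 ≤ S)
    (h : Fin p → ℝ) (hne : h ≠ 0)
    (hcone : (∑ j ∈ Tᶜ, |h j|) ≤ (∑ j ∈ T, |h j|))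
    (γ : ℝ) (hγ : 0 < γ)
    (hQ : h ⬝ᵥ V.mulVec h ≤ 2 * γ * (∑ j, |h j|))
    (κ : ℝ)
    (hκdef : κ = sInf {x : ℝ | ∃ g : Fin p → ℝ, g ≠ 0 ∧
        (∑ j ∈ Tᶜ, |g j|) ≤ (∑ j ∈ T, |g j|) ∧
        x = Real.sqrt S * Real.sqrt (g ⬝ᵥ V.mulVec g) / (∑ j ∈ T, |g j|)})
    (hκ : 0 < κ) :
    (∑ j, |h j|) ≤ 8 * S * γ / κ ^ 2 := by
  set N : ℝ := ∑ j, |h j| with hN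
  set A : ℝ := ∑ j ∈ T, |h j| with hA
  have hsplit : A + (∑ j ∈ Tᶜ, |h j|) = N := Finset.sum_add_sum_compl T _
  have hNpos : 0 < N := by
    rcases Function.ne_iff.mp hne with ⟨j, hj⟩
    have : 0 < |h j| := abs_pos.mpr hj
    exact Finset.sum_pos' (fun i _ => abs_nonneg _) ⟨j, Finset.mem_univ j, this⟩
  have hN2A : N ≤ 2 * A := by
    have := hcone
    nlinarith
  have hApos : 0 < A := by nlinarith
  have hQnn : 0 ≤ h ⬝ᵥ V.mulVec h := by
    have := hPSD.dotProduct_mulVec_nonneg h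
    simpa using this
  -- κ ≤ the value at h
  have hbdd : BddBelow {x : ℝ | ∃ g : Fin p → ℝ, g ≠ 0 ∧
        (∑ j ∈ Tᶜ, |g j|) ≤ (∑ j ∈ T, |g j|) ∧
        x = Real.sqrt S * Real.sqrt (g ⬝ᵥ V.mulVec g) / (∑ j ∈ T, |g j|)} := by
    refine ⟨0, fun x hx => ?_⟩
    obtain ⟨g, hg0, hgc, rfl⟩ := hx
    have hAg : (0:ℝ) ≤ ∑ j ∈ T, |g j| := Finset.sum_nonneg fun i _ => abs_nonneg _
    positivity
  have hmem : Real.sqrt S * Real.sqrt (h ⬝ᵥ V.mulVec h) / A ∈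
      {x : ℝ | ∃ g : Fin p → ℝ, g ≠ 0 ∧
        (∑ j ∈ Tᶜ, |g j|) ≤ (∑ j ∈ T, |g j|) ∧
        x = Real.sqrt S * Real.sqrt (g ⬝ᵥ V.mulVec g) / (∑ j ∈ T, |g j|)} :=
    ⟨h, hne, hcone, rfl⟩
  have hle : κ ≤ Real.sqrt S * Real.sqrt (h ⬝ᵥ V.mulVec h) / A := by
    rw [hκdef]; exact csInf_le hbdd hmem
  have hmul : κ * A ≤ Real.sqrt S * Real.sqrt (h ⬝ᵥ V.mulVec h) := by
    rw [div_eq_mul_inv] at hle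
    calc κ * A ≤ (Real.sqrt S * Real.sqrt (h ⬝ᵥ V.mulVec h) * A⁻¹) * A :=
          mul_le_mul_of_nonneg_right hle hApos.le
      _ = Real.sqrt S * Real.sqrt (h ⬝ᵥ V.mulVec h) := by
          field_simp
  have hsq : (κ * A) ^ 2 ≤ S * (h ⬝ᵥ V.mulVec h) := by
    have h1 : (Real.sqrt S * Real.sqrt (h ⬝ᵥ V.mulVec h)) ^ 2 = S * (h ⬝ᵥ V.mulVec h) := by
      rw [mul_pow, Real.sq_sqrt (by positivity : (0:ℝ) ≤ (S:ℝ)), Real.sq_sqrt hQnn]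
    have h2 : 0 ≤ κ * A := by positivity
    nlinarith [hmul]
  have hSpos : (0:ℝ) ≤ (S:ℝ) := Nat.cast_nonneg S
  have e1 : κ ^ 2 * N ^ 2 ≤ 8 * S * γ * N := by
    nlinarith [mul_le_mul hN2A hN2A hNpos.le (by linarith : (0:ℝ) ≤ 2 * A),
      mul_le_mul_of_nonneg_left hQ hSpos, sq_nonneg κ, hsq]
  have key : κ ^ 2 * N ≤ 8 * S * γ :=
    le_of_mul_le_mul_right (by nlinarith) hNpos
  have hk2 : 0 < κ ^ 2 := by positivity
  rw [le_div_iff₀ hk2]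
  nlinarith [key]
end

section
/- (Deterministic core of the l_q error bound.) Let V be symmetric PSD, T ⊂ {1,…,p} with |T| = S ≥ 1, q ∈ [1,∞), and F_q = F_q(T,V) = inf_{0≠g∈C_T} S^{1/q}(g^T V g)/(‖g_T‖₁‖g‖_q) > 0. If 0 ≠ h ∈ C_T satisfies h^T V h ≤ 2γ‖h‖₁ ≤ 4γ‖h_T‖₁ for some γ > 0, then ‖h‖_q ≤ 4·S^{1/q}·γ / F_q. -/
open Finset Matrix

/-- Deterministic core of the l_q error bound: for `q ∈ [1,∞)`, if `0 ≠ h ∈ C_T`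
satisfies `hᵀVh ≤ 2γ‖h‖₁ ≤ 4γ‖h_T‖₁` and the weak cone invertibility factor
`F_q = F_q(T,V) > 0`, then `‖h‖_q ≤ 4·S^{1/q}·γ/F_q`. -/
theorem stmt7 (p : ℕ) (V : Matrix (Fin p) (Fin p) ℝ) (hPSD : V.PosSemidef)
    (T : Finset (Fin p)) (S : ℕ) (hcard : T.card = S) (hS : 1 ≤ S)
    (q : ℝ) (hq : 1 ≤ q)
    (h : Fin p → ℝ) (hne : h ≠ 0)
    (hcone : (∑ j ∈ Tᶜ, |h j|) ≤ (∑ j ∈ T, |h j|))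
    (γ : ℝ) (hγ : 0 < γ)
    (hQ : h ⬝ᵥ V.mulVec h ≤ 2 * γ * (∑ j, |h j|))
    (hQ' : 2 * γ * (∑ j, |h j|) ≤ 4 * γ * (∑ j ∈ T, |h j|))
    (Fq : ℝ)
    (hFdef : Fq = sInf {x : ℝ | ∃ g : Fin p → ℝ, g ≠ 0 ∧
        (∑ j ∈ Tᶜ, |g j|) ≤ (∑ j ∈ T, |g j|) ∧
        x = (S : ℝ) ^ (1 / q) * (g ⬝ᵥ V.mulVec g) /
          ((∑ j ∈ T, |g j|) * (∑ j, |g j| ^ q) ^ (1 / q))})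
    (hF : 0 < Fq) :
    (∑ j, |h j| ^ q) ^ (1 / q) ≤ 4 * (S : ℝ) ^ (1 / q) * γ / Fq := by
  have hq0 : 0 < q := lt_of_lt_of_le one_pos hq
  set A : ℝ := ∑ j ∈ T, |h j| with hAdef
  set B : ℝ := (∑ j, |h j| ^ q) ^ (1 / q) with hBdef
  -- Q(g) ≥ 0 for all g
  have hQnonneg : ∀ g : Fin p → ℝ, 0 ≤ g ⬝ᵥ V.mulVec g := by
    intro g
    have := hPSD.dotProduct_mulVec_nonneg g
    simpa using this
  -- A > 0
  have hApos : 0 < A := by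
    rcases (lt_or_eq_of_le (Finset.sum_nonneg fun j _ => abs_nonneg (h j))).symm with hA0 | hpos
    · exfalso
      apply hne
      funext j
      have h1 : ∀ j ∈ T, |h j| = 0 :=
        (Finset.sum_eq_zero_iff_of_nonneg (fun j _ => abs_nonneg _)).mp hA0.symm
      have hle : (∑ j ∈ Tᶜ, |h j|) ≤ 0 := by simp only [hAdef] at hcone; linarith [hcone, hA0]
      have h2 : ∀ j ∈ Tᶜ, |h j| = 0 :=
        (Finset.sum_eq_zero_iff_of_nonneg (fun j _ => abs_nonneg _)).mp
          (le_antisymm hle (Finset.sum_nonneg fun j _ => abs_nonneg _))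
      by_cases hj : j ∈ T
      · exact abs_eq_zero.mp (h1 j hj)
      · exact abs_eq_zero.mp (h2 j (Finset.mem_compl.mpr hj))
    · exact hpos
  -- B > 0
  have hBpos : 0 < B := by
    obtain ⟨j0, hj0⟩ : ∃ j, h j ≠ 0 := by
      by_contra hc
      push_neg at hc
      exact hne (funext hc)
    have hsum : 0 < ∑ j, |h j| ^ q := by
      apply Finset.sum_pos' (fun j _ => Real.rpow_nonneg (abs_nonneg _) q)
      exact ⟨j0, Finset.mem_univ _, Real.rpow_pos_of_pos (abs_pos.mpr hj0) q⟩
    exact Real.rpow_pos_of_pos hsum _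
  have hSnn : (0:ℝ) ≤ (S : ℝ) ^ (1 / q) := Real.rpow_nonneg (Nat.cast_nonneg S) _
  -- Fq ≤ value at h
  have hmem : ((S : ℝ) ^ (1 / q) * (h ⬝ᵥ V.mulVec h) / (A * B)) ∈
      {x : ℝ | ∃ g : Fin p → ℝ, g ≠ 0 ∧
        (∑ j ∈ Tᶜ, |g j|) ≤ (∑ j ∈ T, |g j|) ∧
        x = (S : ℝ) ^ (1 / q) * (g ⬝ᵥ V.mulVec g) /
          ((∑ j ∈ T, |g j|) * (∑ j, |g j| ^ q) ^ (1 / q))} :=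
    ⟨h, hne, hcone, rfl⟩
  have hbdd : BddBelow {x : ℝ | ∃ g : Fin p → ℝ, g ≠ 0 ∧
      (∑ j ∈ Tᶜ, |g j|) ≤ (∑ j ∈ T, |g j|) ∧
      x = (S : ℝ) ^ (1 / q) * (g ⬝ᵥ V.mulVec g) /
        ((∑ j ∈ T, |g j|) * (∑ j, |g j| ^ q) ^ (1 / q))} := by
    refine ⟨0, fun x hx => ?_⟩
    obtain ⟨g, -, -, rfl⟩ := hx
    apply div_nonneg (mul_nonneg hSnn (hQnonneg g))
    exact mul_nonneg (Finset.sum_nonneg fun j _ => abs_nonneg _)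
      (Real.rpow_nonneg (Finset.sum_nonneg fun j _ =>
        Real.rpow_nonneg (abs_nonneg _) q) _)
  have hFle : Fq ≤ (S : ℝ) ^ (1 / q) * (h ⬝ᵥ V.mulVec h) / (A * B) := by
    rw [hFdef]
    exact csInf_le hbdd hmem
  have hABpos : 0 < A * B := mul_pos hApos hBpos
  have key : Fq * (A * B) ≤ (S : ℝ) ^ (1 / q) * (h ⬝ᵥ V.mulVec h) :=
    (le_div_iff₀ hABpos).mp hFle
  have chain : (S : ℝ) ^ (1 / q) * (h ⬝ᵥ V.mulVec h) ≤ (4 * (S : ℝ) ^ (1 / q) * γ) * A := by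
    have h1 : (S : ℝ) ^ (1 / q) * (h ⬝ᵥ V.mulVec h) ≤
        (S : ℝ) ^ (1 / q) * (4 * γ * A) :=
      mul_le_mul_of_nonneg_left (le_trans hQ hQ') hSnn
    linarith [h1]
  have final : (Fq * B) * A ≤ (4 * (S : ℝ) ^ (1 / q) * γ) * A := by
    calc (Fq * B) * A = Fq * (A * B) := by ring
    _ ≤ (S : ℝ) ^ (1 / q) * (h ⬝ᵥ V.mulVec h) := key
    _ ≤ (4 * (S : ℝ) ^ (1 / q) * γ) * A := chain
  have hFB : Fq * B ≤ 4 * (S : ℝ) ^ (1 / q) * γ :=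
    le_of_mul_le_mul_right final hApos
  exact (le_div_iff₀ hF).mpr (by linarith [hFB])
end

section
/- Let X₁,…,X_N be real random variables with tail bounds P(|X_i| ≥ ε) ≤ 2·exp(-ε²/(2(εK + NR²))) for all ε > 0 and all i, where K, R > 0. Then there is a universal constant L₁ > 0 (depending only on the Orlicz function Φ₁(x) = eˣ - 1) such that ‖max_{1≤i≤N} |X_i|‖_{Φ₁} ≤ L₁·(K·log(1+N) + √(NR²·log(1+N))). -/
open MeasureTheory

/-- The Orlicz norm with respect to `Φ₁(x) = eˣ - 1`. -/
noncomputable def orliczNormExp {Ω : Type} [MeasurableSpace Ω] (P : Measure Ω)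
    (X : Ω → ℝ) : ℝ :=
  sInf {c : ℝ | 0 < c ∧ (∫ ω, (Real.exp (|X ω| / c) - 1) ∂P) ≤ 1}

lemma aux_log_two : (5/8 : ℝ) ≤ Real.log 2 := by
  rw [Real.le_log_iff_exp_le (by norm_num)]
  have e1 : Real.exp 1 < 2.7182818286 := Real.exp_one_lt_d9
  have h8 : Real.exp (5/8) ^ 8 = Real.exp 5 := by
    rw [← Real.exp_nat_mul]; norm_num
  have h5 : Real.exp 5 = Real.exp 1 ^ 5 := by
    rw [← Real.exp_nat_mul]; norm_num
  refine le_of_pow_le_pow_left₀ (n := 8) (by norm_num) (by norm_num) ?_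
  rw [h8, h5]
  have hp : Real.exp 1 ^ 5 ≤ 2.7182818286 ^ 5 :=
    pow_le_pow_left₀ (Real.exp_pos 1).le e1.le 5
  calc Real.exp 1 ^ 5 ≤ 2.7182818286 ^ 5 := hp
    _ ≤ (2:ℝ) ^ 8 := by norm_num

lemma aux_log_three_half : (1/4 : ℝ) ≤ Real.log (3/2) := by
  rw [Real.le_log_iff_exp_le (by norm_num)]
  have e1 : Real.exp 1 < 2.7182818286 := Real.exp_one_lt_d9
  have h4 : Real.exp (1/4) ^ 4 = Real.exp 1 := by
    rw [← Real.exp_nat_mul]; norm_num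
  refine le_of_pow_le_pow_left₀ (n := 4) (by norm_num) (by norm_num) ?_
  rw [h4]
  calc Real.exp 1 ≤ 2.7182818286 := e1.le
    _ ≤ (3/2:ℝ) ^ 4 := by norm_num

lemma aux_two_rpow : (2:ℝ) ^ ((3:ℝ)/2) ≤ 3 := by
  have h : ((2:ℝ) ^ ((3:ℝ)/2)) ^ (2:ℕ) = (2:ℝ) ^ (3:ℕ) := by
    rw [← Real.rpow_natCast ((2:ℝ) ^ ((3:ℝ)/2)) 2, ← Real.rpow_mul (by norm_num)]
    norm_num
  refine le_of_pow_le_pow_left₀ (n := 2) (by norm_num) (by norm_num) ?_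
  rw [h]; norm_num

set_option maxHeartbeats 1000000 in
/-- Maximal inequality for the Orlicz norm `Φ₁(x) = eˣ - 1` (van der Vaart–Wellner,
Lemma 2.2.10): there is a universal constant `L₁ > 0` such that for random variables
`X₁,…,X_N` with Bernstein-type tails `P(|X_i| ≥ ε) ≤ 2·exp(-ε²/(2(εK + NR²)))`,
`‖max_i |X_i|‖_{Φ₁} ≤ L₁·(K·log(1+N) + √(NR²·log(1+N)))`. -/
theorem stmt10 :
    ∃ L₁ : ℝ, 0 < L₁ ∧
      ∀ (Ω : Type) (_ : MeasurableSpace Ω) (P : Measure Ω), IsProbabilityMeasure P →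
      ∀ (N : ℕ) (X : Fin N → Ω → ℝ) (K R : ℝ), 0 < K → 0 < R →
      (∀ i : Fin N, ∀ ε : ℝ, 0 < ε →
        P {ω | ε ≤ |X i ω|} ≤
          ENNReal.ofReal (2 * Real.exp (-(ε ^ 2) / (2 * (ε * K + N * R ^ 2))))) →
      orliczNormExp P (fun ω => ⨆ i : Fin N, |X i ω|) ≤
        L₁ * (K * Real.log (1 + N) + Real.sqrt (N * R ^ 2 * Real.log (1 + N))) := by
  refine ⟨64, by norm_num, ?_⟩
  intro Ω mΩ P hP N X K R hK hR htail
  rcases Nat.eq_zero_or_pos N with hN0 | hN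
  · -- trivial case N = 0
    subst hN0
    have hsup : (fun ω => ⨆ i : Fin 0, |X i ω|) = fun _ : Ω => (0:ℝ) := by
      funext ω; exact Real.iSup_of_isEmpty _
    rw [hsup]
    have hRHS : (64:ℝ) * (K * Real.log (1 + (0:ℕ)) +
        Real.sqrt ((0:ℕ) * R ^ 2 * Real.log (1 + (0:ℕ)))) = 0 := by
      norm_num
    rw [hRHS]
    unfold orliczNormExp
    have hsub : Set.Ioi (0:ℝ) ⊆
        {c : ℝ | 0 < c ∧ (∫ ω, (Real.exp (|(fun _ : Ω => (0:ℝ)) ω| / c) - 1) ∂P) ≤ 1} := by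
      intro c hc
      refine ⟨hc, ?_⟩
      simp
    calc sInf {c : ℝ | 0 < c ∧
          (∫ ω, (Real.exp (|(fun _ : Ω => (0:ℝ)) ω| / c) - 1) ∂P) ≤ 1}
        ≤ sInf (Set.Ioi (0:ℝ)) :=
          csInf_le_csInf ⟨0, fun x hx => hx.1.le⟩ ⟨1, by norm_num⟩ hsub
      _ = 0 := csInf_Ioi
  · -- main case N ≥ 1
    have hN1 : (1:ℝ) ≤ (N:ℝ) := by exact_mod_cast hN
    have hlogN : Real.log 2 ≤ Real.log (1 + (N:ℝ)) :=
      Real.log_le_log (by norm_num) (by linarith)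
    have hlogN0 : (5/8:ℝ) ≤ Real.log (1 + (N:ℝ)) := le_trans aux_log_two hlogN
    have hlogpos : 0 < Real.log (1 + (N:ℝ)) := lt_of_lt_of_le (by norm_num) hlogN0
    have hVpos : 0 < (N:ℝ) * R ^ 2 := by positivity
    set a : ℝ := K * Real.log (1 + (N:ℝ)) with ha
    set b : ℝ := Real.sqrt ((N:ℝ) * R ^ 2 * Real.log (1 + (N:ℝ))) with hb
    have hapos : 0 < a := by positivity
    have hbpos : 0 < b := Real.sqrt_pos.mpr (by positivity)
    have hb2 : b ^ 2 = (N:ℝ) * R ^ 2 * Real.log (1 + (N:ℝ)) :=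
      Real.sq_sqrt (by positivity)
    set c : ℝ := 64 * (a + b) with hc
    have hcpos : 0 < c := by positivity
    show orliczNormExp P (fun ω => ⨆ i : Fin N, |X i ω|) ≤ c
    set M : Ω → ℝ := fun ω => ⨆ i : Fin N, |X i ω| with hM
    have hM0 : ∀ ω, 0 ≤ M ω := by
      intro ω
      refine le_trans (abs_nonneg (X ⟨0, hN⟩ ω)) ?_
      exact le_ciSup (f := fun i : Fin N => |X i ω|)
        (Set.Finite.bddAbove (Set.finite_range _)) ⟨0, hN⟩
    set f : Ω → ℝ := fun ω => Real.exp (M ω / c) - 1 with hf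
    have hf0 : ∀ ω, 0 ≤ f ω := by
      intro ω
      have h1 : (1:ℝ) ≤ Real.exp (M ω / c) :=
        Real.one_le_exp (div_nonneg (hM0 ω) hcpos.le)
      simp only [hf]; linarith
    have habs : (fun ω => Real.exp (|M ω| / c) - 1) = f := by
      funext ω; rw [abs_of_nonneg (hM0 ω)]
    unfold orliczNormExp
    refine csInf_le ⟨0, fun x hx => hx.1.le⟩ ⟨hcpos, ?_⟩
    show (∫ ω, (Real.exp (|M ω| / c) - 1) ∂P) ≤ 1
    rw [habs]
    by_cases hInt : Integrable f P
    swap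
    · rw [integral_undef hInt]; norm_num
    -- key pointwise tail bound for t ≥ 1/2
    have tail_bound : ∀ t : ℝ, 1/2 ≤ t →
        P {ω | t < f ω} ≤ ENNReal.ofReal ((1/32) * t ^ (-(5:ℝ)/2)) := by
      intro t ht
      have ht0 : (0:ℝ) < t := by linarith
      have h1t : (0:ℝ) < 1 + t := by linarith
      set s : ℝ := Real.log (1 + t) with hs
      have hs14 : (1/4:ℝ) ≤ s := by
        refine le_trans aux_log_three_half ?_
        exact Real.log_le_log (by norm_num) (by linarith)
      have hspos : 0 < s := lt_of_lt_of_le (by norm_num) hs14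
      set ε : ℝ := c * s with hε
      have hεpos : 0 < ε := by positivity
      have hincl : {ω | t < f ω} ⊆ ⋃ i : Fin N, {ω | ε ≤ |X i ω|} := by
        intro ω hω
        have h1 : 1 + t < Real.exp (M ω / c) := by
          have h2 := hω
          simp only [hf, Set.mem_setOf_eq] at h2
          linarith
        have h2 : s < M ω / c := by
          have h3 := Real.log_lt_log h1t h1
          rwa [Real.log_exp] at h3
        have h3 : ε < M ω := by
          rw [hε]
          calc c * s < c * (M ω / c) := (mul_lt_mul_iff_right₀ hcpos).mpr h2
            _ = M ω := by field_simp
        haveI : Nonempty (Fin N) := ⟨⟨0, hN⟩⟩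
        obtain ⟨i, hi⟩ := exists_lt_of_lt_ciSup h3
        exact Set.mem_iUnion.mpr ⟨i, le_of_lt hi⟩
      have hunion : P {ω | t < f ω} ≤
          ENNReal.ofReal ((N:ℝ) *
            (2 * Real.exp (-(ε ^ 2) / (2 * (ε * K + N * R ^ 2))))) := by
        calc P {ω | t < f ω} ≤ P (⋃ i : Fin N, {ω | ε ≤ |X i ω|}) := measure_mono hincl
          _ ≤ (∑' i : Fin N, P {ω | ε ≤ |X i ω|}) := measure_iUnion_le _
          _ ≤ (∑' _i : Fin N,
              ENNReal.ofReal (2 * Real.exp (-(ε ^ 2) / (2 * (ε * K + N * R ^ 2))))) :=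
                ENNReal.tsum_le_tsum (fun i => htail i ε hεpos)
          _ = (N:ENNReal) *
              ENNReal.ofReal (2 * Real.exp (-(ε ^ 2) / (2 * (ε * K + N * R ^ 2)))) := by
                rw [tsum_fintype, Finset.sum_const, Finset.card_univ, Fintype.card_fin,
                  nsmul_eq_mul]
          _ = ENNReal.ofReal ((N:ℝ) *
              (2 * Real.exp (-(ε ^ 2) / (2 * (ε * K + N * R ^ 2))))) := by
                rw [ENNReal.ofReal_mul (p := (N:ℝ)) (by positivity), ENNReal.ofReal_natCast]
      have hD : 0 < 2 * (ε * K + (N:ℝ) * R ^ 2) := by positivity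
      -- analytic estimate: exponent is at least 16 s log(1+N)
      have hclaim1 : 16 * s * Real.log (1 + (N:ℝ)) ≤
          ε ^ 2 / (2 * (ε * K + (N:ℝ) * R ^ 2)) := by
        rw [le_div_iff₀ hD]
        rcases le_total (ε * K) ((N:ℝ) * R ^ 2) with hcase | hcase
        · -- gaussian regime
          have hεb : 64 * b * s ≤ ε := by
            have hcb : 64 * b ≤ c := by rw [hc]; nlinarith
            calc 64 * b * s ≤ c * s := by nlinarith
              _ = ε := rfl
          have hsq : (64 * b * s) ^ 2 ≤ ε ^ 2 := by
            nlinarith [mul_nonneg (sub_nonneg.mpr hεb)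
              (by positivity : (0:ℝ) ≤ ε + 64 * b * s)]
          have hbs : (64 * b * s) ^ 2 =
              4096 * ((N:ℝ) * R ^ 2 * Real.log (1 + (N:ℝ))) * s ^ 2 := by
            calc (64 * b * s) ^ 2 = 4096 * b ^ 2 * s ^ 2 := by ring
              _ = 4096 * ((N:ℝ) * R ^ 2 * Real.log (1 + (N:ℝ))) * s ^ 2 := by rw [hb2]
          have hmono : (0:ℝ) ≤ 64 * s * Real.log (1 + (N:ℝ)) *
              ((N:ℝ) * R ^ 2) * (64 * s - 1) := by
            apply mul_nonneg (by positivity)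
            linarith
          calc 16 * s * Real.log (1 + (N:ℝ)) * (2 * (ε * K + (N:ℝ) * R ^ 2))
              ≤ 16 * s * Real.log (1 + (N:ℝ)) * (4 * ((N:ℝ) * R ^ 2)) := by
                nlinarith [mul_nonneg (mul_nonneg hspos.le hlogpos.le)
                  (sub_nonneg.mpr hcase)]
            _ ≤ 4096 * ((N:ℝ) * R ^ 2 * Real.log (1 + (N:ℝ))) * s ^ 2 := by
                nlinarith [hmono]
            _ = (64 * b * s) ^ 2 := hbs.symm
            _ ≤ ε ^ 2 := hsq
        · -- subexponential regime
          have hεa : 64 * a * s ≤ ε := by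
            have hca : 64 * a ≤ c := by rw [hc]; nlinarith
            calc 64 * a * s ≤ c * s := by nlinarith
              _ = ε := rfl
          -- need 16 s log(1+N) * 2(εK + V) ≤ ε²; use V ≤ εK and 64 a s ≤ ε
          have key : 16 * s * Real.log (1 + (N:ℝ)) * (2 * (ε * K + (N:ℝ) * R ^ 2)) ≤
              16 * s * Real.log (1 + (N:ℝ)) * (4 * (ε * K)) := by
            have h0 : 0 ≤ 16 * s * Real.log (1 + (N:ℝ)) := by positivity
            nlinarith [mul_nonneg h0 (sub_nonneg.mpr hcase)]
          refine le_trans key ?_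
          have : 16 * s * Real.log (1 + (N:ℝ)) * (4 * (ε * K)) = (64 * a * s) * ε := by
            rw [ha]; ring
          rw [this, sq]
          exact mul_le_mul_of_nonneg_right hεa hεpos.le
      have hclaim2 : Real.log (2 * (N:ℝ)) + 5 * s ≤ 16 * s * Real.log (1 + (N:ℝ)) := by
        have h2N : Real.log (2 * (N:ℝ)) ≤ 2 * Real.log (1 + (N:ℝ)) := by
          have hle : (2 * (N:ℝ)) ≤ (1 + (N:ℝ)) ^ 2 := by nlinarith
          calc Real.log (2 * (N:ℝ)) ≤ Real.log ((1 + (N:ℝ)) ^ 2) :=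
              Real.log_le_log (by positivity) hle
            _ = 2 * Real.log (1 + (N:ℝ)) := by
              rw [Real.log_pow]; norm_num
        nlinarith [hs14, hlogN0, hspos, hlogpos]
      -- convert to (1+t)^(-5)
      have hexp : (N:ℝ) * (2 * Real.exp (-(ε ^ 2) / (2 * (ε * K + N * R ^ 2)))) ≤
          Real.exp (-5 * s) := by
        have hNpos : (0:ℝ) < N := by linarith
        have heq : (N:ℝ) * (2 * Real.exp (-(ε ^ 2) / (2 * (ε * K + N * R ^ 2)))) =
            Real.exp (Real.log (2 * (N:ℝ)) + -(ε ^ 2) / (2 * (ε * K + N * R ^ 2))) := by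
          rw [Real.exp_add, Real.exp_log (by positivity)]; ring
        rw [heq]
        apply Real.exp_le_exp.mpr
        have hEneg : -(ε ^ 2) / (2 * (ε * K + (N:ℝ) * R ^ 2)) =
            -(ε ^ 2 / (2 * (ε * K + (N:ℝ) * R ^ 2))) := by ring
        rw [hEneg]
        linarith [hclaim1, hclaim2]
      have hrw : Real.exp (-5 * s) = (1 + t) ^ (-(5:ℝ)) := by
        rw [Real.rpow_def_of_pos h1t]
        congr 1
        rw [hs]; ring
      -- (1+t)^(-5) ≤ (1/32) * t^(-5/2)
      have hfinal : (1 + t) ^ (-(5:ℝ)) ≤ (1/32) * t ^ (-(5:ℝ)/2) := by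
        set u : ℝ := Real.sqrt t with hu
        have hu2 : u ^ 2 = t := Real.sq_sqrt ht0.le
        have hupos : 0 < u := Real.sqrt_pos.mpr ht0
        have h2u : 2 * u ≤ 1 + t := by nlinarith [sq_nonneg (u - 1), hu2]
        have hp : (32:ℝ) * u ^ 5 ≤ (1 + t) ^ 5 := by
          have := pow_le_pow_left₀ (by positivity : (0:ℝ) ≤ 2 * u) h2u 5
          nlinarith [this]
        have ht52 : t ^ ((5:ℝ)/2) = u ^ 5 := by
          have h1 : t ^ ((5:ℝ)/2) = (t ^ ((1:ℝ)/2)) ^ (5:ℕ) := by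
            rw [← Real.rpow_natCast (t ^ ((1:ℝ)/2)) 5, ← Real.rpow_mul ht0.le]
            norm_num
          rw [h1, ← Real.sqrt_eq_rpow, ← hu]
        have hneg1 : (1 + t) ^ (-(5:ℝ)) = ((1 + t) ^ (5:ℕ))⁻¹ := by
          rw [← Real.rpow_natCast (1 + t) 5, ← Real.rpow_neg h1t.le]
          norm_num
        have hneg2 : t ^ (-(5:ℝ)/2) = (t ^ ((5:ℝ)/2))⁻¹ := by
          rw [← Real.rpow_neg ht0.le]; norm_num
        rw [hneg1, hneg2, ht52]
        rw [inv_le_iff_one_le_mul₀ (by positivity)]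
        have hinv : (1/32:ℝ) * (u ^ 5)⁻¹ * (1 + t) ^ (5:ℕ) =
            ((1 + t) ^ 5) / (32 * u ^ 5) := by
          field_simp
        rw [hinv, le_div_iff₀ (by positivity)]
        linarith [hp]
      calc P {ω | t < f ω} ≤ ENNReal.ofReal ((N:ℝ) *
            (2 * Real.exp (-(ε ^ 2) / (2 * (ε * K + N * R ^ 2))))) := hunion
        _ ≤ ENNReal.ofReal ((1/32) * t ^ (-(5:ℝ)/2)) := by
            apply ENNReal.ofReal_le_ofReal
            calc (N:ℝ) * (2 * Real.exp (-(ε ^ 2) / (2 * (ε * K + N * R ^ 2))))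
                ≤ Real.exp (-5 * s) := hexp
              _ = (1 + t) ^ (-(5:ℝ)) := hrw
              _ ≤ (1/32) * t ^ (-(5:ℝ)/2) := hfinal
    -- main lintegral bound
    have key : ∫⁻ ω, ENNReal.ofReal (f ω) ∂P ≤ 1 := by
      rw [lintegral_eq_lintegral_meas_lt P (Filter.Eventually.of_forall hf0)
        hInt.aemeasurable]
      have hsplit : Set.Ioi (0:ℝ) = Set.Ioc 0 (1/2) ∪ Set.Ioi (1/2) :=
        (Set.Ioc_union_Ioi_eq_Ioi (by norm_num)).symm
      rw [hsplit, lintegral_union measurableSet_Ioi Set.Ioc_disjoint_Ioi_same]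
      have h1 : ∫⁻ t in Set.Ioc (0:ℝ) (1/2), P {ω | t < f ω} ≤ ENNReal.ofReal (1/2) := by
        calc ∫⁻ t in Set.Ioc (0:ℝ) (1/2), P {ω | t < f ω}
            ≤ ∫⁻ _t in Set.Ioc (0:ℝ) (1/2), 1 :=
              setLIntegral_mono' measurableSet_Ioc (fun t _ => prob_le_one)
          _ = volume (Set.Ioc (0:ℝ) (1/2)) := setLIntegral_one _
          _ = ENNReal.ofReal (1/2) := by rw [Real.volume_Ioc]; norm_num
      have h2 : ∫⁻ t in Set.Ioi (1/2:ℝ), P {ω | t < f ω} ≤ ENNReal.ofReal (1/16) := by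
        have hg : IntegrableOn (fun t : ℝ => (1/32) * t ^ (-(5:ℝ)/2)) (Set.Ioi (1/2)) := by
          have := integrableOn_Ioi_rpow_of_lt (a := -(5:ℝ)/2) (by norm_num)
            (c := (1/2:ℝ)) (by norm_num)
          exact this.const_mul _
        have hnn : 0 ≤ᵐ[volume.restrict (Set.Ioi (1/2:ℝ))]
            fun t : ℝ => (1/32) * t ^ (-(5:ℝ)/2) := by
          rw [Filter.EventuallyLE, ae_restrict_iff' measurableSet_Ioi]
          refine Filter.Eventually.of_forall (fun t ht => ?_)
          have ht0 : (0:ℝ) < t := lt_trans (by norm_num) ht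
          have := Real.rpow_nonneg ht0.le (-(5:ℝ)/2)
          positivity
        calc ∫⁻ t in Set.Ioi (1/2:ℝ), P {ω | t < f ω}
            ≤ ∫⁻ t in Set.Ioi (1/2:ℝ), ENNReal.ofReal ((1/32) * t ^ (-(5:ℝ)/2)) :=
              setLIntegral_mono' measurableSet_Ioi (fun t ht => tail_bound t (le_of_lt ht))
          _ = ENNReal.ofReal (∫ t in Set.Ioi (1/2:ℝ), (1/32) * t ^ (-(5:ℝ)/2)) :=
              (ofReal_integral_eq_lintegral_ofReal hg hnn).symm
          _ ≤ ENNReal.ofReal (1/16) := by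
              apply ENNReal.ofReal_le_ofReal
              rw [integral_const_mul, integral_Ioi_rpow_of_lt (by norm_num) (by norm_num)]
              rw [show (-(5:ℝ)/2 + 1) = -(3:ℝ)/2 by norm_num]
              have hhalf : ((1/2:ℝ)) ^ (-(3:ℝ)/2) = (2:ℝ) ^ ((3:ℝ)/2) := by
                rw [show (1/2:ℝ) = (2:ℝ)⁻¹ by norm_num,
                  Real.inv_rpow (by norm_num), ← Real.rpow_neg (by norm_num)]
                norm_num
              rw [hhalf]
              linarith [aux_two_rpow]
      calc (∫⁻ t in Set.Ioc (0:ℝ) (1/2), P {ω | t < f ω}) +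
            ∫⁻ t in Set.Ioi (1/2:ℝ), P {ω | t < f ω}
          ≤ ENNReal.ofReal (1/2) + ENNReal.ofReal (1/16) := add_le_add h1 h2
        _ = ENNReal.ofReal (9/16) := by
            rw [← ENNReal.ofReal_add (by norm_num) (by norm_num)]; norm_num
        _ ≤ 1 := ENNReal.ofReal_le_one.mpr (by norm_num)
    rw [integral_eq_lintegral_of_nonneg_ae (Filter.Eventually.of_forall hf0)
      hInt.aestronglyMeasurable]
    calc (∫⁻ ω, ENNReal.ofReal (f ω) ∂P).toReal ≤ (1:ENNReal).toReal :=
        ENNReal.toReal_mono ENNReal.one_ne_top key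
      _ = 1 := by simp
end
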